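/- For every integer n ≥ 2 and all real numbers κ′ ≤ κ, one has I_{κ′}(v) ≥ I_κ(v) for every v > 0 lying in the ranges of both V_{κ′} and V_κ; that is, the model isoperimetric profile is pointwise non-increasing as a function of the curvature parameter κ. -/

import Mathlib

open Real MeasureTheory Filter Asymptotics

/-- Inverse hyperbolic tangent. -/
noncomputable def artanh (y : ℝ) : ℝ := Real.log ((1 + y) / (1 - y)) / 2

/-- The generalized sine function `sin_κ`. -/
noncomputable def sinK (κ t : ℝ) : ℝ :=
  if 0 < κ then Real.sin (Real.sqrt κ * t) / Real.sqrt κ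
  else if κ < 0 then Real.sinh (Real.sqrt (-κ) * t) / Real.sqrt (-κ)
  else t

/-- The generalized cosine function `cos_κ = sin_κ'`. -/
noncomputable def cosK (κ t : ℝ) : ℝ :=
  if 0 < κ then Real.cos (Real.sqrt κ * t)
  else if κ < 0 then Real.cosh (Real.sqrt (-κ) * t)
  else 1

/-- The generalized tangent function `tan_κ`. -/
noncomputable def tanK (κ t : ℝ) : ℝ := sinK κ t / cosK κ t

/-- The inverse function `arctan_κ` of `tan_κ`. -/
noncomputable def arctanK (κ x : ℝ) : ℝ :=
  if 0 < κ then Real.arctan (Real.sqrt κ * x) / Real.sqrt κ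
  else if κ < 0 then _root_.artanh (Real.sqrt (-κ) * x) / Real.sqrt (-κ)
  else x

/-- `ω_{n-1}`, the (n-1)-volume of the unit sphere of ℝⁿ, i.e. `n` times the
volume of the unit ball. -/
noncomputable def omegaS (n : ℕ) : ℝ :=
  n * (volume (Metric.ball (0 : EuclideanSpace ℝ (Fin n)) 1)).toReal

/-- `A_κ(t)`: the volume of a geodesic sphere of radius `t` in the model space. -/
noncomputable def AK (n : ℕ) (κ t : ℝ) : ℝ := omegaS n * sinK κ t ^ (n - 1)

/-- `V_κ(t)`: the volume of a geodesic ball of radius `t` in the model space. -/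
noncomputable def VK (n : ℕ) (κ t : ℝ) : ℝ := omegaS n * ∫ s in (0:ℝ)..t, sinK κ s ^ (n - 1)

/-- The natural domain of `V_κ`: `[0, π/√κ)` when `κ > 0` and `[0, ∞)` otherwise. -/
noncomputable def domK (κ : ℝ) : Set ℝ :=
  if 0 < κ then Set.Ico 0 (Real.pi / Real.sqrt κ) else Set.Ici 0

/-- The range of `V_κ` (on its natural domain). -/
noncomputable def rangeVK (n : ℕ) (κ : ℝ) : Set ℝ := VK n κ '' domK κ

/-- The inverse of `V_κ` on its natural domain. -/
noncomputable def VKinv (n : ℕ) (κ v : ℝ) : ℝ := sInf {t : ℝ | t ∈ domK κ ∧ VK n κ t = v}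

/-- The isoperimetric profile `I_κ = A_κ ∘ V_κ⁻¹` of the model space. -/
noncomputable def IK (n : ℕ) (κ v : ℝ) : ℝ := AK n κ (VKinv n κ v)
/-! ### Auxiliary lemmas -/

section Aux

/-- The inverse function `arcsin_κ` of `sin_κ`. -/
noncomputable def arcsinK (κ x : ℝ) : ℝ :=
  if 0 < κ then Real.arcsin (Real.sqrt κ * x) / Real.sqrt κ
  else if κ < 0 then Real.arsinh (Real.sqrt (-κ) * x) / Real.sqrt (-κ)
  else x

lemma sinK_zero (κ : ℝ) : sinK κ 0 = 0 := by
  unfold sinK; split_ifs <;> simp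

lemma continuous_sinK (κ : ℝ) : Continuous (sinK κ) := by
  unfold sinK; split_ifs <;> fun_prop

lemma continuous_arcsinK (κ : ℝ) : Continuous (arcsinK κ) := by
  unfold arcsinK; split_ifs
  · exact (Real.continuous_arcsin.comp (continuous_const.mul continuous_id)).div_const _
  · exact (Real.continuous_arsinh.comp (continuous_const.mul continuous_id)).div_const _
  · exact continuous_id

lemma sinK_nonneg {κ t : ℝ} (ht : 0 ≤ t) (ht2 : 0 < κ → t ≤ Real.pi / Real.sqrt κ) :
    0 ≤ sinK κ t := by
  unfold sinK; split_ifs with h1 h2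
  · have hs : 0 < Real.sqrt κ := Real.sqrt_pos.2 h1
    apply div_nonneg _ hs.le
    apply Real.sin_nonneg_of_nonneg_of_le_pi (by positivity)
    calc Real.sqrt κ * t ≤ Real.sqrt κ * (Real.pi / Real.sqrt κ) := by
          exact mul_le_mul_of_nonneg_left (ht2 h1) hs.le
      _ = Real.pi := mul_div_cancel₀ _ hs.ne'
  · have hs : 0 < Real.sqrt (-κ) := Real.sqrt_pos.2 (by linarith)
    exact div_nonneg (Real.sinh_nonneg_iff.2 (by positivity)) hs.le
  · exact ht

lemma sinK_pos {κ t : ℝ} (ht : 0 < t) (ht2 : 0 < κ → t < Real.pi / Real.sqrt κ) :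
    0 < sinK κ t := by
  unfold sinK; split_ifs with h1 h2
  · have hs : 0 < Real.sqrt κ := Real.sqrt_pos.2 h1
    apply div_pos _ hs
    apply Real.sin_pos_of_pos_of_lt_pi (by positivity)
    calc Real.sqrt κ * t < Real.sqrt κ * (Real.pi / Real.sqrt κ) := by
          exact mul_lt_mul_of_pos_left (ht2 h1) hs
      _ = Real.pi := mul_div_cancel₀ _ hs.ne'
  · have hs : 0 < Real.sqrt (-κ) := Real.sqrt_pos.2 (by linarith)
    exact div_pos (Real.sinh_pos_iff.2 (by positivity)) hs
  · exact ht

lemma sinK_mono_nonpos {κ : ℝ} (hκ : κ ≤ 0) {a b : ℝ} (hab : a ≤ b) :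
    sinK κ a ≤ sinK κ b := by
  unfold sinK; split_ifs with h1 h2
  · linarith
  · have hs : 0 ≤ Real.sqrt (-κ) := Real.sqrt_nonneg _
    gcongr
    exact Real.sinh_le_sinh.2 (mul_le_mul_of_nonneg_left hab hs)
  · exact hab

lemma mem_domK {κ t : ℝ} :
    t ∈ domK κ ↔ 0 ≤ t ∧ (0 < κ → t < Real.pi / Real.sqrt κ) := by
  unfold domK; split_ifs with h
  · simp [Set.mem_Ico, h]
  · simp [Set.mem_Ici, h]

lemma omegaS_pos {n : ℕ} (hn : 2 ≤ n) : 0 < omegaS n := by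
  unfold omegaS
  have h2 : 0 < volume (Metric.ball (0 : EuclideanSpace ℝ (Fin n)) 1) :=
    Metric.measure_ball_pos volume 0 one_pos
  have h3 : volume (Metric.ball (0 : EuclideanSpace ℝ (Fin n)) 1) ≠ ⊤ :=
    measure_ball_lt_top.ne
  exact mul_pos (by exact_mod_cast Nat.pos_of_ne_zero (by omega)) (ENNReal.toReal_pos h2.ne' h3)

lemma hasDerivAt_VK (n : ℕ) (κ t : ℝ) : HasDerivAt (VK n κ) (AK n κ t) t := by
  have h := (((continuous_sinK κ).pow (n-1)).integral_hasStrictDerivAt 0 t).hasDerivAt.const_mul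
    (omegaS n)
  exact h

lemma continuous_VK (n : ℕ) (κ : ℝ) : Continuous (VK n κ) :=
  continuous_iff_continuousAt.2 fun t => (hasDerivAt_VK n κ t).continuousAt

lemma VK_zero (n : ℕ) (κ : ℝ) : VK n κ 0 = 0 := by unfold VK; simp

lemma intervalIntegrable_sinK (n : ℕ) (κ a b : ℝ) :
    IntervalIntegrable (fun s => sinK κ s ^ (n-1)) volume a b :=
  ((continuous_sinK κ).pow _).intervalIntegrable _ _

lemma VK_lt_VK {n : ℕ} (hn : 2 ≤ n) {κ a b : ℝ} (ha : 0 ≤ a) (hab : a < b)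
    (hb : 0 < κ → b ≤ Real.pi / Real.sqrt κ) : VK n κ a < VK n κ b := by
  have hpos : 0 < ∫ s in a..b, sinK κ s ^ (n-1) := by
    apply intervalIntegral.intervalIntegral_pos_of_pos_on (intervalIntegrable_sinK n κ a b) _ hab
    intro x hx
    exact pow_pos (sinK_pos (lt_of_le_of_lt ha hx.1) (fun h => lt_of_lt_of_le hx.2 (hb h))) _
  have hadd : (∫ s in (0:ℝ)..a, sinK κ s ^ (n-1)) + ∫ s in a..b, sinK κ s ^ (n-1)
      = ∫ s in (0:ℝ)..b, sinK κ s ^ (n-1) :=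
    intervalIntegral.integral_add_adjacent_intervals (intervalIntegrable_sinK n κ 0 a)
      (intervalIntegrable_sinK n κ a b)
  have hom := omegaS_pos hn
  unfold VK
  nlinarith [mul_pos hom hpos]

lemma VK_le_VK {n : ℕ} (hn : 2 ≤ n) {κ a b : ℝ} (ha : 0 ≤ a) (hab : a ≤ b)
    (hb : 0 < κ → b ≤ Real.pi / Real.sqrt κ) : VK n κ a ≤ VK n κ b := by
  rcases hab.eq_or_lt with rfl | hlt
  · exact le_refl _
  · exact (VK_lt_VK hn ha hlt hb).le

lemma VKinv_VK {n : ℕ} (hn : 2 ≤ n) {κ t : ℝ} (ht : t ∈ domK κ) :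
    VKinv n κ (VK n κ t) = t := by
  have hset : {s : ℝ | s ∈ domK κ ∧ VK n κ s = VK n κ t} = {t} := by
    ext s
    simp only [Set.mem_setOf_eq, Set.mem_singleton_iff]
    constructor
    · rintro ⟨hs, hVs⟩
      rcases mem_domK.1 hs with ⟨hs0, hsb⟩
      rcases mem_domK.1 ht with ⟨ht0, htb⟩
      by_contra hne
      rcases lt_or_gt_of_ne hne with hlt | hgt
      · exact absurd hVs (ne_of_lt (VK_lt_VK hn hs0 hlt (fun h => (htb h).le)))
      · exact absurd hVs (ne_of_gt (VK_lt_VK hn ht0 hgt (fun h => (hsb h).le)))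
    · rintro rfl; exact ⟨ht, rfl⟩
  unfold VKinv
  rw [hset, csInf_singleton]

lemma arcsinK_zero (κ : ℝ) : arcsinK κ 0 = 0 := by
  unfold arcsinK; split_ifs <;> simp

lemma arcsinK_nonneg {κ x : ℝ} (hx : 0 ≤ x) : 0 ≤ arcsinK κ x := by
  unfold arcsinK; split_ifs with h1 h2
  · exact div_nonneg (Real.arcsin_nonneg.2 (by positivity)) (Real.sqrt_nonneg _)
  · exact div_nonneg (Real.arsinh_nonneg_iff.2 (by positivity)) (Real.sqrt_nonneg _)
  · exact hx

lemma arcsinK_pos {κ x : ℝ} (hx : 0 < x) : 0 < arcsinK κ x := by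
  unfold arcsinK; split_ifs with h1 h2
  · exact div_pos (Real.arcsin_pos.2 (mul_pos (Real.sqrt_pos.2 h1) hx)) (Real.sqrt_pos.2 h1)
  · exact div_pos (Real.arsinh_pos_iff.2 (mul_pos (Real.sqrt_pos.2 (by linarith)) hx))
      (Real.sqrt_pos.2 (by linarith))
  · exact hx

lemma arcsinK_le_half {κ : ℝ} (hκ : 0 < κ) (x : ℝ) :
    arcsinK κ x ≤ Real.pi / (2 * Real.sqrt κ) := by
  unfold arcsinK
  rw [if_pos hκ]
  have hs : 0 < Real.sqrt κ := Real.sqrt_pos.2 hκ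
  rw [show Real.pi / (2 * Real.sqrt κ) = (Real.pi / 2) / Real.sqrt κ from (div_div _ _ _).symm]
  gcongr
  exact Real.arcsin_le_pi_div_two _

lemma half_lt_pi_div {κ : ℝ} (hκ : 0 < κ) :
    Real.pi / (2 * Real.sqrt κ) < Real.pi / Real.sqrt κ := by
  have hs : 0 < Real.sqrt κ := Real.sqrt_pos.2 hκ
  have hpos : 0 < Real.pi / Real.sqrt κ := by positivity
  calc Real.pi / (2 * Real.sqrt κ) = (Real.pi / Real.sqrt κ) / 2 := by
        rw [div_div, mul_comm]
    _ < Real.pi / Real.sqrt κ := half_lt_self hpos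

lemma arcsinK_mem_domK {κ x : ℝ} (hx : 0 ≤ x) : arcsinK κ x ∈ domK κ := by
  rw [mem_domK]
  exact ⟨arcsinK_nonneg hx, fun h => (arcsinK_le_half h x).trans_lt (half_lt_pi_div h)⟩

lemma sinK_arcsinK {κ x : ℝ} (hx : 0 ≤ x) (hxk : 0 < κ → Real.sqrt κ * x ≤ 1) :
    sinK κ (arcsinK κ x) = x := by
  unfold sinK arcsinK; split_ifs with h1 h2
  · have hs : 0 < Real.sqrt κ := Real.sqrt_pos.2 h1
    have e1 : Real.sqrt κ * (Real.arcsin (Real.sqrt κ * x) / Real.sqrt κ)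
        = Real.arcsin (Real.sqrt κ * x) := by field_simp
    rw [e1, Real.sin_arcsin (le_trans (by norm_num) (mul_nonneg hs.le hx)) (hxk h1)]
    exact mul_div_cancel_left₀ x hs.ne'
  · have hs : 0 < Real.sqrt (-κ) := Real.sqrt_pos.2 (by linarith)
    have e1 : Real.sqrt (-κ) * (Real.arsinh (Real.sqrt (-κ) * x) / Real.sqrt (-κ))
        = Real.arsinh (Real.sqrt (-κ) * x) := by field_simp
    rw [e1, Real.sinh_arsinh]
    exact mul_div_cancel_left₀ x hs.ne'
  · rfl

lemma arcsinK_mono {κ : ℝ} : Monotone (arcsinK κ) := by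
  intro a b hab
  unfold arcsinK; split_ifs with h1 h2
  · have hs : 0 < Real.sqrt κ := Real.sqrt_pos.2 h1
    exact div_le_div_of_nonneg_right
      (Real.monotone_arcsin (mul_le_mul_of_nonneg_left hab hs.le)) hs.le
  · have hs : 0 < Real.sqrt (-κ) := Real.sqrt_pos.2 (by linarith)
    exact div_le_div_of_nonneg_right
      (Real.arsinh_le_arsinh.2 (mul_le_mul_of_nonneg_left hab hs.le)) hs.le
  · exact hab

lemma hasDerivAt_arcsinK {κ x : ℝ} (hx : 0 ≤ x) (hxk : 0 < κ → Real.sqrt κ * x < 1) :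
    HasDerivAt (arcsinK κ) (1 / Real.sqrt (1 - κ * x ^ 2)) x := by
  unfold arcsinK
  split_ifs with h1 h2
  · have hs : 0 < Real.sqrt κ := Real.sqrt_pos.2 h1
    have hinner : HasDerivAt (fun y : ℝ => Real.sqrt κ * y) (Real.sqrt κ) x := by
      simpa using (hasDerivAt_id x).const_mul (Real.sqrt κ)
    have hne1 : Real.sqrt κ * x ≠ -1 := by
      have : (0:ℝ) ≤ Real.sqrt κ * x := mul_nonneg hs.le hx
      intro hc; rw [hc] at this; linarith
    have harc : HasDerivAt Real.arcsin
        (1 / Real.sqrt (1 - (Real.sqrt κ * x) ^ 2)) (Real.sqrt κ * x) :=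
      Real.hasDerivAt_arcsin hne1 (ne_of_lt (hxk h1))
    have hcomp := (harc.comp x hinner).div_const (Real.sqrt κ)
    refine hcomp.congr_deriv ?_
    rw [mul_pow, Real.sq_sqrt h1.le]
    rw [mul_div_assoc, div_self hs.ne', mul_one]
  · have hs : 0 < Real.sqrt (-κ) := Real.sqrt_pos.2 (by linarith)
    have hinner : HasDerivAt (fun y : ℝ => Real.sqrt (-κ) * y) (Real.sqrt (-κ)) x := by
      simpa using (hasDerivAt_id x).const_mul (Real.sqrt (-κ))
    have hcomp := ((Real.hasDerivAt_arsinh (Real.sqrt (-κ) * x)).comp x hinner).div_const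
      (Real.sqrt (-κ))
    refine hcomp.congr_deriv ?_
    rw [mul_pow, Real.sq_sqrt (by linarith : (0:ℝ) ≤ -κ),
      show 1 + -κ * x ^ 2 = 1 - κ * x ^ 2 by ring]
    rw [one_div, mul_div_assoc, div_self hs.ne', mul_one]
  · have hκ : κ = 0 := le_antisymm (not_lt.1 h1) (not_lt.1 h2)
    subst hκ
    exact (hasDerivAt_id' x).congr_deriv (by simp)

lemma hasDerivAt_W {n : ℕ} {κ x : ℝ} (hx : 0 ≤ x) (hxk : 0 < κ → Real.sqrt κ * x < 1) :
    HasDerivAt (fun y => VK n κ (arcsinK κ y))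
      (omegaS n * x ^ (n - 1) * (1 / Real.sqrt (1 - κ * x ^ 2))) x := by
  have h := (hasDerivAt_VK n κ (arcsinK κ x)).comp x (hasDerivAt_arcsinK hx hxk)
  rw [show AK n κ (arcsinK κ x) = omegaS n * x ^ (n - 1) from by
    unfold AK; rw [sinK_arcsinK hx (fun h' => (hxk h').le)]] at h
  exact h

lemma one_sub_kappa_pos {κ x : ℝ} (hx : 0 ≤ x) (hxk : 0 < κ → Real.sqrt κ * x < 1) :
    0 < 1 - κ * x ^ 2 := by
  rcases le_or_gt κ 0 with hk | hk
  · nlinarith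
  · have h1 := hxk hk
    have h2 : 0 ≤ Real.sqrt κ * x := mul_nonneg (Real.sqrt_nonneg _) hx
    have h3 : (Real.sqrt κ * x) ^ 2 < 1 := by nlinarith
    rw [mul_pow, Real.sq_sqrt hk.le] at h3
    linarith

lemma W_le_W {n : ℕ} (hn : 2 ≤ n) {κ' κ x : ℝ} (h : κ' ≤ κ) (hx : 0 ≤ x)
    (hxk : 0 < κ → Real.sqrt κ * x ≤ 1) :
    VK n κ' (arcsinK κ' x) ≤ VK n κ (arcsinK κ x) := by
  have hsq : Real.sqrt κ' ≤ Real.sqrt κ := Real.sqrt_le_sqrt h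
  set g : ℝ → ℝ := fun y => VK n κ (arcsinK κ y) - VK n κ' (arcsinK κ' y) with hg
  have hyfacts : ∀ y ∈ Set.Ioo 0 x,
      (0 < κ → Real.sqrt κ * y < 1) ∧ (0 < κ' → Real.sqrt κ' * y < 1) := by
    intro y hy
    have hyk : 0 < κ → Real.sqrt κ * y < 1 := fun hh =>
      lt_of_lt_of_le (mul_lt_mul_of_pos_left hy.2 (Real.sqrt_pos.2 hh)) (hxk hh)
    refine ⟨hyk, fun hh => ?_⟩
    have hκpos : 0 < κ := lt_of_lt_of_le hh h
    calc Real.sqrt κ' * y ≤ Real.sqrt κ * y := mul_le_mul_of_nonneg_right hsq hy.1.le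
      _ < 1 := hyk hκpos
  have hder : ∀ y ∈ Set.Ioo 0 x, HasDerivAt g
      (omegaS n * y ^ (n - 1) * (1 / Real.sqrt (1 - κ * y ^ 2))
        - omegaS n * y ^ (n - 1) * (1 / Real.sqrt (1 - κ' * y ^ 2))) y := by
    intro y hy
    obtain ⟨hk1, hk2⟩ := hyfacts y hy
    exact (hasDerivAt_W hy.1.le hk1).sub (hasDerivAt_W hy.1.le hk2)
  have hmono : MonotoneOn g (Set.Icc 0 x) := by
    apply monotoneOn_of_deriv_nonneg (convex_Icc 0 x)
    · exact (((continuous_VK n κ).comp (continuous_arcsinK κ)).sub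
        ((continuous_VK n κ').comp (continuous_arcsinK κ'))).continuousOn
    · rw [interior_Icc]
      exact fun y hy => ((hder y hy).differentiableAt).differentiableWithinAt
    · rw [interior_Icc]
      intro y hy
      rw [(hder y hy).deriv]
      obtain ⟨hk1, hk2⟩ := hyfacts y hy
      have hp1 : 0 < 1 - κ * y ^ 2 := one_sub_kappa_pos hy.1.le hk1
      have hp2 : 0 < 1 - κ' * y ^ 2 := one_sub_kappa_pos hy.1.le hk2
      have hle : 1 - κ * y ^ 2 ≤ 1 - κ' * y ^ 2 := by nlinarith [sq_nonneg y]
      have hsqle : Real.sqrt (1 - κ * y ^ 2) ≤ Real.sqrt (1 - κ' * y ^ 2) :=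
        Real.sqrt_le_sqrt hle
      have hrec : 1 / Real.sqrt (1 - κ' * y ^ 2) ≤ 1 / Real.sqrt (1 - κ * y ^ 2) :=
        one_div_le_one_div_of_le (Real.sqrt_pos.2 hp1) hsqle
      have hcoef : 0 ≤ omegaS n * y ^ (n - 1) :=
        mul_nonneg (omegaS_pos hn).le (pow_nonneg hy.1.le _)
      nlinarith [mul_le_mul_of_nonneg_left hrec hcoef]
  have h0 : g 0 = 0 := by simp [hg, arcsinK_zero, VK_zero]
  have hfin := hmono (Set.left_mem_Icc.2 hx) (Set.right_mem_Icc.2 hx) hx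
  rw [h0] at hfin
  simpa [hg] using hfin

lemma sinK_reflect {κ : ℝ} (hκ : 0 < κ) (s : ℝ) :
    sinK κ (Real.pi / Real.sqrt κ - s) = sinK κ s := by
  have hs : 0 < Real.sqrt κ := Real.sqrt_pos.2 hκ
  unfold sinK
  rw [if_pos hκ, if_pos hκ, mul_sub, mul_div_cancel₀ _ hs.ne', Real.sin_pi_sub]

lemma VK_reflect {n : ℕ} {κ : ℝ} (hκ : 0 < κ) (u : ℝ) :
    VK n κ (Real.pi / Real.sqrt κ - u)
      = 2 * VK n κ (Real.pi / (2 * Real.sqrt κ)) - VK n κ u := by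
  have hs : 0 < Real.sqrt κ := Real.sqrt_pos.2 hκ
  set T : ℝ := Real.pi / Real.sqrt κ with hT
  have hhalf : Real.pi / (2 * Real.sqrt κ) = T / 2 := by
    rw [hT, div_div, mul_comm]
  set f : ℝ → ℝ := fun s => sinK κ s ^ (n - 1) with hf
  have hsym : ∀ s, f (T - s) = f s := fun s => by
    rw [hf]; simp only []; rw [sinK_reflect hκ]
  have key : ∀ a b : ℝ, (∫ s in a..b, f s) = ∫ s in (T - b)..(T - a), f s := by
    intro a b
    rw [← intervalIntegral.integral_comp_sub_left f T]
    exact intervalIntegral.integral_congr fun x _ => (hsym x).symm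
  have h1 : (∫ s in (0:ℝ)..(T / 2), f s) + ∫ s in (T / 2)..(T - u), f s
      = ∫ s in (0:ℝ)..(T - u), f s :=
    intervalIntegral.integral_add_adjacent_intervals (intervalIntegrable_sinK n κ _ _)
      (intervalIntegrable_sinK n κ _ _)
  have h2 : (∫ s in (0:ℝ)..u, f s) + ∫ s in u..(T / 2), f s
      = ∫ s in (0:ℝ)..(T / 2), f s :=
    intervalIntegral.integral_add_adjacent_intervals (intervalIntegrable_sinK n κ _ _)
      (intervalIntegrable_sinK n κ _ _)
  have h3 : (∫ s in u..(T / 2), f s) = ∫ s in (T / 2)..(T - u), f s := by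
    rw [key u (T / 2), show T - T / 2 = T / 2 by ring]
  unfold VK
  rw [hhalf]
  simp only [hf] at h1 h2 h3
  linear_combination (-omegaS n) * h1 + omegaS n * h2 - omegaS n * h3

lemma arcsinK_sinK_nonpos {κ t : ℝ} (hκ : κ ≤ 0) : arcsinK κ (sinK κ t) = t := by
  unfold sinK arcsinK
  split_ifs with h1 h2
  · linarith
  · have hs : 0 < Real.sqrt (-κ) := Real.sqrt_pos.2 (by linarith)
    rw [mul_div_cancel₀ _ hs.ne', Real.arsinh_sinh, mul_div_cancel_left₀ _ hs.ne']
  · rfl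

lemma arcsin_sin_le {x : ℝ} (hx : 0 ≤ x) : Real.arcsin (Real.sin x) ≤ x := by
  rcases le_total x (Real.pi / 2) with h | h
  · rw [Real.arcsin_sin (by linarith [Real.pi_pos]) h]
  · exact (Real.arcsin_le_pi_div_two _).trans h

lemma arcsin_sin_le_pi_sub {x : ℝ} (hx : 0 ≤ x) (hx2 : x ≤ Real.pi) :
    Real.arcsin (Real.sin x) ≤ Real.pi - x := by
  rcases le_total x (Real.pi / 2) with h | h
  · rw [Real.arcsin_sin (by linarith [Real.pi_pos]) h]; linarith
  · rw [← Real.sin_pi_sub, Real.arcsin_sin (by linarith) (by linarith)]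

lemma sin_ge_of_mem {a y : ℝ} (ha0 : 0 ≤ a) (ha : a ≤ Real.pi / 2) (h1 : a ≤ y)
    (h2 : y ≤ Real.pi - a) : Real.sin a ≤ Real.sin y := by
  rcases le_total y (Real.pi / 2) with hy | hy
  · exact Real.strictMonoOn_sin.monotoneOn ⟨by linarith, ha⟩ ⟨by linarith, hy⟩ h1
  · rw [← Real.sin_pi_sub y]
    exact Real.strictMonoOn_sin.monotoneOn ⟨by linarith, ha⟩
      ⟨by linarith, by linarith⟩ (by linarith)

lemma arcsinK_sinK_le {κ t : ℝ} (hκ : 0 < κ) (ht : 0 ≤ t) (ht2 : t ≤ Real.pi / Real.sqrt κ) :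
    arcsinK κ (sinK κ t) ≤ t ∧ arcsinK κ (sinK κ t) ≤ Real.pi / Real.sqrt κ - t := by
  have hs : 0 < Real.sqrt κ := Real.sqrt_pos.2 hκ
  unfold sinK arcsinK
  rw [if_pos hκ, if_pos hκ, mul_div_cancel₀ _ hs.ne']
  constructor
  · calc Real.arcsin (Real.sin (Real.sqrt κ * t)) / Real.sqrt κ
        ≤ Real.sqrt κ * t / Real.sqrt κ :=
          div_le_div_of_nonneg_right (arcsin_sin_le (by positivity)) hs.le
      _ = t := mul_div_cancel_left₀ _ hs.ne'
  · have h1 : Real.sqrt κ * t ≤ Real.pi := by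
      calc Real.sqrt κ * t ≤ Real.sqrt κ * (Real.pi / Real.sqrt κ) :=
            mul_le_mul_of_nonneg_left ht2 hs.le
        _ = Real.pi := mul_div_cancel₀ _ hs.ne'
    calc Real.arcsin (Real.sin (Real.sqrt κ * t)) / Real.sqrt κ
        ≤ (Real.pi - Real.sqrt κ * t) / Real.sqrt κ :=
          div_le_div_of_nonneg_right (arcsin_sin_le_pi_sub (by positivity) h1) hs.le
      _ = Real.pi / Real.sqrt κ - t := by
          rw [sub_div, mul_div_cancel_left₀ _ hs.ne']

lemma arcsinK_one_div_sqrt {κ : ℝ} (hκ : 0 < κ) :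
    arcsinK κ (1 / Real.sqrt κ) = Real.pi / (2 * Real.sqrt κ) := by
  have hs : 0 < Real.sqrt κ := Real.sqrt_pos.2 hκ
  unfold arcsinK
  rw [if_pos hκ, mul_one_div, div_self hs.ne', Real.arcsin_one, div_div]

lemma VK_half_eq {n : ℕ} (hn : 2 ≤ n) {κ : ℝ} (hκ : 0 < κ) :
    VK n κ (Real.pi / (2 * Real.sqrt κ))
      = omegaS n * (1 / Real.sqrt κ) ^ n * ∫ u in (0:ℝ)..(Real.pi / 2), Real.sin u ^ (n - 1) := by
  have hc : 0 < Real.sqrt κ := Real.sqrt_pos.2 hκ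
  have hend : Real.sqrt κ * (Real.pi / (2 * Real.sqrt κ)) = Real.pi / 2 := by
    field_simp
  have key : (∫ t in (0:ℝ)..(Real.pi / (2 * Real.sqrt κ)), Real.sin (Real.sqrt κ * t) ^ (n - 1))
      = (Real.sqrt κ)⁻¹ • ∫ u in (0:ℝ)..(Real.pi / 2), Real.sin u ^ (n - 1) := by
    rw [intervalIntegral.integral_comp_mul_left (fun u => Real.sin u ^ (n - 1)) hc.ne',
      mul_zero, hend]
  have hpow : Real.sqrt κ ^ (n - 1) * Real.sqrt κ = Real.sqrt κ ^ n := by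
    rw [← pow_succ]
    congr 1
    omega
  unfold VK
  simp only [sinK, if_pos hκ, div_pow]
  rw [intervalIntegral.integral_div, key, smul_eq_mul, one_pow, div_eq_mul_inv 1,
    one_mul, ← hpow, mul_inv]
  ring

lemma VK_half_mono {n : ℕ} (hn : 2 ≤ n) {κ' κ : ℝ} (h : κ' ≤ κ) (hκ' : 0 < κ') :
    VK n κ (Real.pi / (2 * Real.sqrt κ)) ≤ VK n κ' (Real.pi / (2 * Real.sqrt κ')) := by
  have hκ : 0 < κ := lt_of_lt_of_le hκ' h
  rw [VK_half_eq hn hκ, VK_half_eq hn hκ']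
  have hC : 0 ≤ ∫ u in (0:ℝ)..(Real.pi / 2), Real.sin u ^ (n - 1) := by
    apply intervalIntegral.integral_nonneg (by linarith [Real.pi_pos])
    intro u hu
    exact pow_nonneg (Real.sin_nonneg_of_nonneg_of_le_pi hu.1
      (hu.2.trans (by linarith [Real.pi_pos]))) _
  have hmono : (1 / Real.sqrt κ) ^ n ≤ (1 / Real.sqrt κ') ^ n := by
    apply pow_le_pow_left₀ (by positivity)
    exact one_div_le_one_div_of_le (Real.sqrt_pos.2 hκ') (Real.sqrt_le_sqrt h)
  have hom := (omegaS_pos hn).le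
  exact mul_le_mul_of_nonneg_right (mul_le_mul_of_nonneg_left hmono hom) hC

end Aux

/-- The model isoperimetric profile is pointwise non-increasing in the curvature
parameter: if `κ' ≤ κ` then `I_{κ'}(v) ≥ I_κ(v)` for every `v > 0` lying in the
ranges of both `V_{κ'}` and `V_κ`. -/
theorem isoperimetric_profile_antitone_in_curvature (n : ℕ) (hn : 2 ≤ n)
    (κ' κ : ℝ) (h : κ' ≤ κ) :
    ∀ v : ℝ, 0 < v → v ∈ rangeVK n κ' → v ∈ rangeVK n κ →
      IK n κ v ≤ IK n κ' v := by
  intro v hv hv' hvK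
  obtain ⟨t, htdom, htv⟩ := hvK
  obtain ⟨t', htdom', htv'⟩ := hv'
  unfold IK
  rw [show VKinv n κ v = t from by rw [← htv, VKinv_VK hn htdom],
    show VKinv n κ' v = t' from by rw [← htv', VKinv_VK hn htdom']]
  obtain ⟨ht0, htb⟩ := mem_domK.1 htdom
  obtain ⟨ht0', htb'⟩ := mem_domK.1 htdom'
  have hom := omegaS_pos hn
  have htpos : 0 < t := by
    rcases ht0.eq_or_lt with rfl | hlt
    · rw [VK_zero] at htv; linarith
    · exact hlt
  have htpos' : 0 < t' := by
    rcases ht0'.eq_or_lt with rfl | hlt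
    · rw [VK_zero] at htv'; linarith
    · exact hlt
  set s : ℝ := sinK κ t with hsdef
  have hspos : 0 < s := sinK_pos htpos htb
  have hκs : 0 < κ → Real.sqrt κ * s ≤ 1 := by
    intro hk
    rw [hsdef]
    unfold sinK
    rw [if_pos hk, mul_div_cancel₀ _ (Real.sqrt_pos.2 hk).ne']
    exact Real.sin_le_one _
  set t₁ : ℝ := arcsinK κ s with ht1def
  set t₀ : ℝ := arcsinK κ' s with ht0def
  have ht1_le : t₁ ≤ t := by
    rcases le_or_gt κ 0 with hk | hk
    · rw [ht1def, hsdef, arcsinK_sinK_nonpos hk]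
    · exact (arcsinK_sinK_le hk ht0 (htb hk).le).1
  have hreflect : 0 < κ → t ≤ Real.pi / Real.sqrt κ - t₁ := fun hk => by
    have := (arcsinK_sinK_le hk ht0 (htb hk).le).2
    linarith
  have hW : VK n κ' t₀ ≤ VK n κ t₁ := W_le_W hn h hspos.le hκs
  have hK1 : VK n κ' t₀ ≤ v := by
    calc VK n κ' t₀ ≤ VK n κ t₁ := hW
      _ ≤ VK n κ t := VK_le_VK hn (arcsinK_nonneg hspos.le) ht1_le (fun hk => (htb hk).le)
      _ = v := htv
  have ht0dom : t₀ ∈ domK κ' := arcsinK_mem_domK hspos.le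
  have ht0_le_t' : t₀ ≤ t' := by
    by_contra hc
    push_neg at hc
    have hlt := VK_lt_VK hn ht0' hc
      (fun hk => ((mem_domK.1 ht0dom).2 hk).le)
    rw [htv'] at hlt
    linarith
  have hfinal : s ≤ sinK κ' t' := by
    rcases le_or_gt κ' 0 with hk' | hk'
    · calc s = sinK κ' t₀ := (sinK_arcsinK hspos.le
            (fun hkk => absurd hkk (not_lt.2 hk'))).symm
        _ ≤ sinK κ' t' := sinK_mono_nonpos hk' ht0_le_t'
    · -- 0 < κ' ≤ κ
      have hκpos : 0 < κ := lt_of_lt_of_le hk' h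
      have hc' : 0 < Real.sqrt κ' := Real.sqrt_pos.2 hk'
      have hc : 0 < Real.sqrt κ := Real.sqrt_pos.2 hκpos
      have hsqle : Real.sqrt κ' ≤ Real.sqrt κ := Real.sqrt_le_sqrt h
      have hκ's_le : Real.sqrt κ' * s ≤ 1 :=
        le_trans (mul_le_mul_of_nonneg_right hsqle hspos.le) (hκs hκpos)
      -- comparison of half volumes
      have hhalfmono : VK n κ (Real.pi / (2 * Real.sqrt κ))
          ≤ VK n κ' (Real.pi / (2 * Real.sqrt κ')) := VK_half_mono hn h hk'
      have hK2 : v ≤ VK n κ' (Real.pi / Real.sqrt κ' - t₀) := by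
        have hstep : VK n κ t ≤ VK n κ (Real.pi / Real.sqrt κ - t₁) := by
          apply VK_le_VK hn ht0 (hreflect hκpos)
          intro _
          have := arcsinK_nonneg (κ := κ) hspos.le
          rw [← ht1def] at this
          linarith
        calc v = VK n κ t := htv.symm
          _ ≤ VK n κ (Real.pi / Real.sqrt κ - t₁) := hstep
          _ = 2 * VK n κ (Real.pi / (2 * Real.sqrt κ)) - VK n κ t₁ := VK_reflect hκpos t₁
          _ ≤ 2 * VK n κ' (Real.pi / (2 * Real.sqrt κ')) - VK n κ' t₀ := by linarith
          _ = VK n κ' (Real.pi / Real.sqrt κ' - t₀) := (VK_reflect hk' t₀).symm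
      have ht'le : t' ≤ Real.pi / Real.sqrt κ' - t₀ := by
        by_contra hcc
        push_neg at hcc
        have h0r : 0 ≤ Real.pi / Real.sqrt κ' - t₀ := by
          have h1 := arcsinK_le_half hk' s
          have h2 := half_lt_pi_div hk'
          rw [← ht0def] at h1
          linarith
        have hlt2 := VK_lt_VK hn h0r hcc (fun hk => (htb' hk).le)
        rw [htv'] at hlt2
        linarith
      -- now use concavity of sin on [0, π]
      have ht0eq : Real.sqrt κ' * t₀ = Real.arcsin (Real.sqrt κ' * s) := by
        rw [ht0def]
        unfold arcsinK
        rw [if_pos hk', mul_div_cancel₀ _ hc'.ne']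
      have ha0 : 0 ≤ Real.arcsin (Real.sqrt κ' * s) :=
        Real.arcsin_nonneg.2 (by positivity)
      have hy1 : Real.arcsin (Real.sqrt κ' * s) ≤ Real.sqrt κ' * t' := by
        rw [← ht0eq]
        exact mul_le_mul_of_nonneg_left ht0_le_t' hc'.le
      have hy2 : Real.sqrt κ' * t' ≤ Real.pi - Real.arcsin (Real.sqrt κ' * s) := by
        rw [← ht0eq]
        calc Real.sqrt κ' * t' ≤ Real.sqrt κ' * (Real.pi / Real.sqrt κ' - t₀) :=
              mul_le_mul_of_nonneg_left ht'le hc'.le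
          _ = Real.pi - Real.sqrt κ' * t₀ := by
              rw [mul_sub, mul_div_cancel₀ _ hc'.ne']
      have hsge := sin_ge_of_mem ha0 (Real.arcsin_le_pi_div_two _) hy1 hy2
      rw [Real.sin_arcsin (le_trans (by norm_num) (by positivity : (0:ℝ) ≤ Real.sqrt κ' * s))
        hκ's_le] at hsge
      have hsinK' : sinK κ' t' = Real.sin (Real.sqrt κ' * t') / Real.sqrt κ' := by
        unfold sinK; rw [if_pos hk']
      rw [hsinK', le_div_iff₀ hc']
      linarith
  unfold AK
  exact mul_le_mul_of_nonneg_left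
    (pow_le_pow_left₀ hspos.le hfinal _) hom.le
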